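/- Let k ≥ 1, let q₁, …, q_{k+1} be unit imaginary quaternions with q_i ≠ ±q_j for i ≠ j, and let U_k ⊆ ℍ^{k+1} be the real span of the standard basis vectors ε₁, …, ε_{k+1} together with e_j = q_j·ε_j + q_{j+1}·ε_{j+1}, j = 1, …, k. Then for every unit imaginary quaternion p, U_k^⊥ + p•(U_k^⊥) = ℍ^{k+1}, where U_k^⊥ = {y ∈ ℍ^{k+1} : Re(Σ x_i·conj(y_i)) = 0 for all x ∈ U_k}; that is, the dual of the pair (U_k, ℍ^{k+1}) is given by a CR quaternionic vector space. -/

import Mathlib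

set_option maxHeartbeats 1000000


open Quaternion

/-- Componentwise left multiplication by a quaternion `p` on `ℍ^n`, as a real-linear map. -/
noncomputable def mulLeftLM (n : ℕ) (p : Quaternion ℝ) :
    (Fin n → Quaternion ℝ) →ₗ[ℝ] (Fin n → Quaternion ℝ) :=
  LinearMap.pi fun i => (LinearMap.mulLeft ℝ p).comp (LinearMap.proj i)

/-- The orthogonal complement `U^⊥` of a real subspace `U ⊆ ℍ^n` with respect to the real
inner product `(x, y) ↦ Re (Σ_i x_i · conj (y_i))`. -/
noncomputable def orthQ (n : ℕ) (U : Submodule ℝ (Fin n → Quaternion ℝ)) :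
    Submodule ℝ (Fin n → Quaternion ℝ) where
  carrier := {y | ∀ x ∈ U, ∑ i, (x i * star (y i)).re = 0}
  add_mem' := by
    intro a b ha hb x hx
    have h1 := ha x hx
    have h2 := hb x hx
    simp only [Pi.add_apply, star_add, mul_add, Quaternion.re_add, Finset.sum_add_distrib]
    linarith
  zero_mem' := by
    intro x hx
    simp
  smul_mem' := by
    intro r y hy x hx
    have h1 := hy x hx
    simp only [Pi.smul_apply, Quaternion.star_smul, mul_smul_comm, Quaternion.re_smul,
      smul_eq_mul, ← Finset.mul_sum, h1, mul_zero]

/-- The model subspace `U_k ⊆ ℍ^{k+1}`: the real span of the standard basis vectors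
`ε₁, …, ε_{k+1}` together with the vectors `e_j = q_j·ε_j + q_{j+1}·ε_{j+1}`,
`j = 1, …, k`. -/
noncomputable def UkSub (k : ℕ) (q : Fin (k + 1) → Quaternion ℝ) :
    Submodule ℝ (Fin (k + 1) → Quaternion ℝ) :=
  Submodule.span ℝ
    ((Set.range fun i : Fin (k + 1) => Pi.single i (1 : Quaternion ℝ)) ∪
     (Set.range fun j : Fin k =>
        Pi.single j.castSucc (q j.castSucc) + Pi.single j.succ (q j.succ)))


lemma quat_unit (p : Quaternion ℝ) (hp : p ^ 2 = -1) :
    p.re = 0 ∧ p.imI^2 + p.imJ^2 + p.imK^2 = 1 := by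
  rw [sq, Quaternion.ext_iff] at hp
  simp only [Quaternion.re_mul, Quaternion.imI_mul, Quaternion.imJ_mul, Quaternion.imK_mul,
    Quaternion.re_neg, Quaternion.imI_neg, Quaternion.imJ_neg, Quaternion.imK_neg,
    Quaternion.re_one, Quaternion.imI_one, Quaternion.imJ_one, Quaternion.imK_one,
    neg_zero] at hp
  obtain ⟨h1, h2, h3, h4⟩ := hp
  have hre : p.re = 0 := by nlinarith [sq_nonneg p.re]
  exact ⟨hre, by nlinarith⟩

lemma re_star_comm (a b : Quaternion ℝ) : (a * star b).re = (b * star a).re := by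
  simp only [Quaternion.re_mul, Quaternion.re_star, Quaternion.imI_star, Quaternion.imJ_star,
    Quaternion.imK_star]
  ring

lemma lemA (p q : Quaternion ℝ) (hp : p ^ 2 = -1) (hq : q ^ 2 = -1)
    (h1 : p ≠ q) (h2 : p ≠ -q) (c : Quaternion ℝ) :
    ∃ v v' : Quaternion ℝ, v.re = 0 ∧ (v * star q).re = 0 ∧ v'.re = 0 ∧
      (v' * star q).re = 0 ∧ c = v + p * v' := by
  obtain ⟨hpre, hpn⟩ := quat_unit p hp
  obtain ⟨hqre, hqn⟩ := quat_unit q hq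
  have hqn' : normSq q = 1 := by rw [Quaternion.normSq_def']; nlinarith
  have hpp : p * p = -1 := by rw [← sq]; exact hp
  set α : ℝ := (p * star q).re with hα
  have hαc : α = p.imI*q.imI + p.imJ*q.imJ + p.imK*q.imK := by
    rw [hα]
    simp only [Quaternion.re_mul, Quaternion.re_star, Quaternion.imI_star, Quaternion.imJ_star,
      Quaternion.imK_star, hpre, hqre]
    ring
  -- α² ≠ 1
  have hα2 : α ^ 2 ≠ 1 := by
    intro hone
    have hfac : (α - 1) * (α + 1) = 0 := by nlinarith
    rcases mul_eq_zero.mp hfac with h | h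
    · apply h1
      have hsum : p.imI*q.imI + p.imJ*q.imJ + p.imK*q.imK = 1 := by
        rw [← hαc]; linarith
      have e1 : (p.imI - q.imI)^2 + (p.imJ - q.imJ)^2 + (p.imK - q.imK)^2 = 0 := by
        linear_combination hpn + hqn - 2*hsum
      have eI : p.imI - q.imI = 0 := by
        have h' : (p.imI - q.imI)^2 ≤ 0 := by linarith [sq_nonneg (p.imJ - q.imJ), sq_nonneg (p.imK - q.imK)]
        exact sq_eq_zero_iff.mp (le_antisymm h' (sq_nonneg _))
      have eJ : p.imJ - q.imJ = 0 := by
        have h' : (p.imJ - q.imJ)^2 ≤ 0 := by linarith [sq_nonneg (p.imI - q.imI), sq_nonneg (p.imK - q.imK)]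
        exact sq_eq_zero_iff.mp (le_antisymm h' (sq_nonneg _))
      have eK : p.imK - q.imK = 0 := by
        have h' : (p.imK - q.imK)^2 ≤ 0 := by linarith [sq_nonneg (p.imI - q.imI), sq_nonneg (p.imJ - q.imJ)]
        exact sq_eq_zero_iff.mp (le_antisymm h' (sq_nonneg _))
      ext <;> linarith
    · apply h2
      have hsum : p.imI*q.imI + p.imJ*q.imJ + p.imK*q.imK = -1 := by
        rw [← hαc]; linarith
      have e1 : (p.imI + q.imI)^2 + (p.imJ + q.imJ)^2 + (p.imK + q.imK)^2 = 0 := by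
        linear_combination hpn + hqn + 2*hsum
      have eI : p.imI + q.imI = 0 := by
        have h' : (p.imI + q.imI)^2 ≤ 0 := by linarith [sq_nonneg (p.imJ + q.imJ), sq_nonneg (p.imK + q.imK)]
        exact sq_eq_zero_iff.mp (le_antisymm h' (sq_nonneg _))
      have eJ : p.imJ + q.imJ = 0 := by
        have h' : (p.imJ + q.imJ)^2 ≤ 0 := by linarith [sq_nonneg (p.imI + q.imI), sq_nonneg (p.imK + q.imK)]
        exact sq_eq_zero_iff.mp (le_antisymm h' (sq_nonneg _))
      have eK : p.imK + q.imK = 0 := by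
        have h' : (p.imK + q.imK)^2 ≤ 0 := by linarith [sq_nonneg (p.imI + q.imI), sq_nonneg (p.imJ + q.imJ)]
        exact sq_eq_zero_iff.mp (le_antisymm h' (sq_nonneg _))
      ext <;> simp only [Quaternion.re_neg, Quaternion.imI_neg, Quaternion.imJ_neg,
        Quaternion.imK_neg] <;> linarith
  set r : Quaternion ℝ := p - α • q with hr
  set s : Quaternion ℝ := p * q + α • (1 : Quaternion ℝ) with hs
  have hrre : r.re = 0 := by simp [hr, hpre, hqre]
  have hrq : (r * star q).re = 0 := by
    simp only [hr, sub_mul, Quaternion.re_sub, smul_mul_assoc, Quaternion.re_smul,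
      Quaternion.self_mul_star, hqn', Quaternion.re_coe, smul_eq_mul]
    simp [← hα]
  have hpq_re : (p * q).re = -α := by
    simp only [Quaternion.re_mul, hpre, hqre, hαc]; ring
  have hsre : s.re = 0 := by
    simp [hs, Quaternion.re_add, hpq_re, Quaternion.re_smul]
  have hsq : (s * star q).re = 0 := by
    have : (p * q) * star q = p * (q * star q) := mul_assoc p q (star q)
    simp only [hs, add_mul, Quaternion.re_add, this, Quaternion.self_mul_star, hqn',
      smul_mul_assoc, one_mul, Quaternion.re_smul]
    simp [hpre, hqre]
  have key1 : p * r = (α^2 - 1) • (1 : Quaternion ℝ) - α • s := by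
    simp only [hr, hs, mul_sub, mul_smul_comm, hpp]
    module
  have key2 : p * s = (α^2 - 1) • q + α • r := by
    have h3 : p * (p * q) = -q := by rw [← mul_assoc, hpp]; simp
    simp only [hs, hr, mul_add, mul_smul_comm, h3, mul_one]
    module
  have hβ0 : (α^2 - 1) ≠ 0 := fun h => hα2 (by linarith)
  obtain ⟨β, hβ1⟩ : ∃ β : ℝ, β * (α^2 - 1) = 1 := ⟨(α^2 - 1)⁻¹, inv_mul_cancel₀ hβ0⟩
  have hone : (α*β) • s + p * (β • r) = (1 : Quaternion ℝ) := by
    rw [mul_smul_comm, key1]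
    match_scalars
    all_goals first | ring1 | linear_combination hβ1 | linear_combination -hβ1
  have hqid : (-(α*β)) • r + p * (β • s) = q := by
    rw [mul_smul_comm, key2]
    match_scalars
    all_goals first | ring1 | linear_combination hβ1 | linear_combination -hβ1
  set b : ℝ := (c * star q).re with hb
  set v₀ : Quaternion ℝ := c - c.re • 1 - b • q with hv₀
  have hv₀re : v₀.re = 0 := by simp [hv₀, Quaternion.re_sub, Quaternion.re_smul, hqre]
  have hv₀q : (v₀ * star q).re = 0 := by
    simp only [hv₀, sub_mul, Quaternion.re_sub, smul_mul_assoc, Quaternion.re_smul,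
      Quaternion.self_mul_star, hqn', one_mul, Quaternion.re_coe, smul_eq_mul, ← hb]
    have : (star q).re = q.re := Quaternion.re_star q
    rw [this, hqre]
    ring
  refine ⟨v₀ + c.re • ((α*β) • s) + b • ((-(α*β)) • r),
          c.re • (β • r) + b • (β • s), ?_, ?_, ?_, ?_, ?_⟩
  · simp [Quaternion.re_add, Quaternion.re_smul, hv₀re, hsre, hrre]
  · simp only [add_mul, Quaternion.re_add, smul_mul_assoc, Quaternion.re_smul, hv₀q, hsq, hrq]
    simp
  · simp [Quaternion.re_add, Quaternion.re_smul, hsre, hrre]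
  · simp only [add_mul, Quaternion.re_add, smul_mul_assoc, Quaternion.re_smul, hsq, hrq]
    simp
  · have hsplit : v₀ + c.re • ((α*β) • s) + b • ((-(α*β)) • r)
        + p * (c.re • (β • r) + b • (β • s))
        = v₀ + c.re • ((α*β) • s + p * (β • r)) + b • ((-(α*β)) • r + p * (β • s)) := by
      simp only [mul_add, mul_smul_comm, smul_add]
      abel
    rw [hsplit, hone, hqid, hv₀]
    abel

noncomputable def pairLM (n : ℕ) (y : Fin n → Quaternion ℝ) :
    (Fin n → Quaternion ℝ) →ₗ[ℝ] ℝ where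
  toFun x := ∑ i, (x i * star (y i)).re
  map_add' a b := by
    simp only [Pi.add_apply, add_mul, Quaternion.re_add]
    rw [Finset.sum_add_distrib]
  map_smul' r a := by
    simp only [Pi.smul_apply, smul_mul_assoc, Quaternion.re_smul, smul_eq_mul, RingHom.id_apply]
    rw [Finset.mul_sum]

lemma mem_orthQ_span {n : ℕ} {S : Set (Fin n → Quaternion ℝ)} {y : Fin n → Quaternion ℝ}
    (h : ∀ x ∈ S, ∑ i, (x i * star (y i)).re = 0) :
    y ∈ orthQ n (Submodule.span ℝ S) := by
  intro x hx
  have hle : Submodule.span ℝ S ≤ LinearMap.ker (pairLM n y) := by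
    rw [Submodule.span_le]
    intro v hv
    exact LinearMap.mem_ker.mpr (h v hv)
  exact LinearMap.mem_ker.mp (hle hx)

lemma pair_single {n : ℕ} (a : Fin n) (c : Quaternion ℝ) (y : Fin n → Quaternion ℝ) :
    ∑ j, ((Pi.single a c : Fin n → Quaternion ℝ) j * star (y j)).re = (c * star (y a)).re := by
  rw [Finset.sum_eq_single a]
  · rw [Pi.single_eq_same]
  · intro b _ hb
    rw [Pi.single_eq_of_ne hb, zero_mul, Quaternion.re_zero]
  · intro h; exact absurd (Finset.mem_univ a) h

lemma mem_orthUk {k : ℕ} {q : Fin (k+1) → Quaternion ℝ} {y : Fin (k+1) → Quaternion ℝ}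
    (h1 : ∀ i, (y i).re = 0)
    (h2 : ∀ j : Fin k,
      (q j.castSucc * star (y j.castSucc)).re + (q j.succ * star (y j.succ)).re = 0) :
    y ∈ orthQ (k+1) (UkSub k q) := by
  apply mem_orthQ_span
  rintro x (⟨i, rfl⟩ | ⟨j, rfl⟩)
  · rw [pair_single]
    simpa using h1 i
  · simp only [Pi.add_apply, add_mul, Quaternion.re_add, Finset.sum_add_distrib]
    rw [pair_single, pair_single]
    exact h2 j

lemma single_mem_orth {k : ℕ} {q : Fin (k+1) → Quaternion ℝ} (a : Fin (k+1)) (v : Quaternion ℝ)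
    (hv1 : v.re = 0) (hv2 : (v * star (q a)).re = 0) :
    (Pi.single a v : Fin (k+1) → Quaternion ℝ) ∈ orthQ (k+1) (UkSub k q) := by
  have key : ∀ b, (q b * star ((Pi.single a v : Fin (k+1) → Quaternion ℝ) b)).re = 0 := by
    intro b
    rcases eq_or_ne b a with rfl | h
    · rw [Pi.single_eq_same, re_star_comm]
      exact hv2
    · rw [Pi.single_eq_of_ne h, star_zero, mul_zero, Quaternion.re_zero]
  apply mem_orthUk
  · intro i
    rcases eq_or_ne i a with rfl | h
    · rw [Pi.single_eq_same]; exact hv1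
    · rw [Pi.single_eq_of_ne h, Quaternion.re_zero]
  · intro j
    rw [key, key, add_zero]

lemma w_mem_orth {k : ℕ} {q : Fin (k+1) → Quaternion ℝ}
    (hqre : ∀ i, (q i).re = 0) (hqn : ∀ i, normSq (q i) = 1) :
    (fun i : Fin (k+1) => ((-1:ℝ)^(i:ℕ)) • q i) ∈ orthQ (k+1) (UkSub k q) := by
  apply mem_orthUk
  · intro i; simp [Quaternion.re_smul, hqre i]
  · intro j
    have hc : ∀ i : Fin (k+1), (q i * star (((-1:ℝ)^(i:ℕ)) • q i)).re = (-1:ℝ)^(i:ℕ) := by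
      intro i
      rw [Quaternion.star_smul, mul_smul_comm, Quaternion.re_smul,
        Quaternion.self_mul_star, hqn i]
      simp
    rw [hc, hc, Fin.coe_castSucc, Fin.val_succ, pow_succ]
    ring

/-- For `k ≥ 1` and unit imaginary quaternions `q₁, …, q_{k+1}` with `q_i ≠ ±q_j`
(`i ≠ j`), the dual of the pair `(U_k, ℍ^{k+1})` is given by a CR quaternionic vector
space: `U_k^⊥ + p•(U_k^⊥) = ℍ^{k+1}` for every unit imaginary quaternion `p`. -/
theorem stmt14 (k : ℕ) (hk : 1 ≤ k) (q : Fin (k + 1) → Quaternion ℝ)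
    (hq : ∀ i, q i ^ 2 = -1)
    (hq' : ∀ i j, i ≠ j → q i ≠ q j ∧ q i ≠ -q j)
    (p : Quaternion ℝ) (hp : p ^ 2 = -1) :
    orthQ (k + 1) (UkSub k q) ⊔ (orthQ (k + 1) (UkSub k q)).map (mulLeftLM (k + 1) p) = ⊤ := by
  have hqre : ∀ i, (q i).re = 0 := fun i => (quat_unit _ (hq i)).1
  have hqn : ∀ i, normSq (q i) = 1 := by
    intro i
    have h2 := (quat_unit _ (hq i)).2
    rw [Quaternion.normSq_def']
    linear_combination h2 + (q i).re * (hqre i)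
  have hsingle_map : ∀ (a : Fin (k+1)) (v : Quaternion ℝ),
      mulLeftLM (k+1) p (Pi.single a v) = Pi.single a (p * v) := by
    intro a v
    funext j
    show p * (Pi.single a v : Fin (k+1) → Quaternion ℝ) j = _
    rcases eq_or_ne j a with rfl | h
    · rw [Pi.single_eq_same, Pi.single_eq_same]
    · rw [Pi.single_eq_of_ne h, Pi.single_eq_of_ne h, mul_zero]
  have hA : ∀ (i : Fin (k+1)), p ≠ q i → p ≠ -q i → ∀ c, Pi.single i c ∈
      orthQ (k + 1) (UkSub k q) ⊔ (orthQ (k + 1) (UkSub k q)).map (mulLeftLM (k + 1) p) := by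
    intro i h1 h2 c
    obtain ⟨v, v', hv1, hv2, hv1', hv2', hc⟩ := lemA p (q i) hp (hq i) h1 h2 c
    rw [hc, Pi.single_add]
    refine Submodule.add_mem _ (Submodule.mem_sup_left (single_mem_orth i v hv1 hv2)) ?_
    exact Submodule.mem_sup_right
      ⟨Pi.single i v', single_mem_orth i v' hv1' hv2', hsingle_map i v'⟩
  rw [eq_top_iff]
  intro y _
  have hy : y = ∑ i, Pi.single i (y i) := (Finset.univ_sum_single y).symm
  rw [hy]
  apply Submodule.sum_mem
  intro i _
  by_cases hcase : p = q i ∨ p = -q i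
  · -- bad coordinate: p = ±q i
    have hother : ∀ j, j ≠ i → ∀ c, Pi.single j c ∈
        orthQ (k + 1) (UkSub k q) ⊔ (orthQ (k + 1) (UkSub k q)).map (mulLeftLM (k + 1) p) := by
      intro j hj c
      obtain ⟨hne1, hne2⟩ := hq' j i hj
      apply hA j
      · intro hh
        rcases hcase with h | h
        · exact hne1 (hh.symm.trans h)
        · exact hne2 (hh.symm.trans h)
      · intro hh
        rcases hcase with h | h
        · have h3 : q i = -q j := h.symm.trans hh
          exact hne2 (by rw [h3, neg_neg])
        · have h3 : q j = q i := neg_injective (hh.symm.trans h)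
          exact hne1 h3
    have hext : ∀ z, z ∈ orthQ (k + 1) (UkSub k q) ⊔
          (orthQ (k + 1) (UkSub k q)).map (mulLeftLM (k + 1) p) →
        Pi.single i (z i) ∈ orthQ (k + 1) (UkSub k q) ⊔
          (orthQ (k + 1) (UkSub k q)).map (mulLeftLM (k + 1) p) := by
      intro z hz
      have hsum : Pi.single i (z i) + ∑ j ∈ Finset.univ.erase i, Pi.single j (z j) = z := by
        have h' := Finset.add_sum_erase Finset.univ
          (fun j => (Pi.single j (z j) : Fin (k+1) → Quaternion ℝ)) (Finset.mem_univ i)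
        rw [Finset.univ_sum_single] at h'
        exact h'
      have hrest : (∑ j ∈ Finset.univ.erase i, Pi.single j (z j)) ∈
          orthQ (k + 1) (UkSub k q) ⊔
            (orthQ (k + 1) (UkSub k q)).map (mulLeftLM (k + 1) p) :=
        Submodule.sum_mem _ (fun j hj => hother j (Finset.ne_of_mem_erase hj) (z j))
      have heq : Pi.single i (z i) = z - ∑ j ∈ Finset.univ.erase i, Pi.single j (z j) :=
        eq_sub_of_add_eq hsum
      rw [heq]
      exact Submodule.sub_mem _ hz hrest
    have hwO : (fun j : Fin (k+1) => ((-1:ℝ)^(j:ℕ)) • q j) ∈ orthQ (k+1) (UkSub k q) :=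
      w_mem_orth hqre hqn
    have hwS : (fun j : Fin (k+1) => ((-1:ℝ)^(j:ℕ)) • q j) ∈ orthQ (k + 1) (UkSub k q) ⊔
        (orthQ (k + 1) (UkSub k q)).map (mulLeftLM (k + 1) p) := Submodule.mem_sup_left hwO
    have hpwS : mulLeftLM (k+1) p (fun j : Fin (k+1) => ((-1:ℝ)^(j:ℕ)) • q j) ∈
        orthQ (k + 1) (UkSub k q) ⊔
        (orthQ (k + 1) (UkSub k q)).map (mulLeftLM (k + 1) p) :=
      Submodule.mem_sup_right (Submodule.mem_map_of_mem hwO)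
    have hsign : ((-1:ℝ)^(i:ℕ)) * ((-1:ℝ)^(i:ℕ)) = 1 := by
      rw [← pow_add]
      exact Even.neg_one_pow ⟨(i:ℕ), rfl⟩
    have h0 : Pi.single i (((-1:ℝ)^(i:ℕ)) • q i) ∈ orthQ (k + 1) (UkSub k q) ⊔
        (orthQ (k + 1) (UkSub k q)).map (mulLeftLM (k + 1) p) := hext _ hwS
    have h0' : Pi.single i (p * (((-1:ℝ)^(i:ℕ)) • q i)) ∈ orthQ (k + 1) (UkSub k q) ⊔
        (orthQ (k + 1) (UkSub k q)).map (mulLeftLM (k + 1) p) := hext _ hpwS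
    have hqiS : Pi.single i (q i) ∈ orthQ (k + 1) (UkSub k q) ⊔
        (orthQ (k + 1) (UkSub k q)).map (mulLeftLM (k + 1) p) := by
      have h1 : (Pi.single i (q i) : Fin (k+1) → Quaternion ℝ) = ((-1:ℝ)^(i:ℕ)) •
          (Pi.single i (((-1:ℝ)^(i:ℕ)) • q i) : Fin (k+1) → Quaternion ℝ) := by
        rw [← Pi.single_smul, smul_smul, hsign, one_smul]
      rw [h1]
      exact Submodule.smul_mem _ _ h0
    have honeS : Pi.single i ((1:Quaternion ℝ)) ∈ orthQ (k + 1) (UkSub k q) ⊔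
        (orthQ (k + 1) (UkSub k q)).map (mulLeftLM (k + 1) p) := by
      rcases hcase with h | h
      · have hpq : p * q i = -1 := by rw [h, ← sq]; exact hq i
        have h1 : (Pi.single i ((1:Quaternion ℝ)) : Fin (k+1) → Quaternion ℝ) =
            (-((-1:ℝ)^(i:ℕ))) •
            (Pi.single i (p * (((-1:ℝ)^(i:ℕ)) • q i)) : Fin (k+1) → Quaternion ℝ) := by
          rw [← Pi.single_smul, mul_smul_comm, hpq, smul_smul, neg_mul, hsign]
          norm_num
        rw [h1]
        exact Submodule.smul_mem _ _ h0'
      · have hpq : p * q i = 1 := by rw [h, neg_mul, ← sq, hq i, neg_neg]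
        have h1 : (Pi.single i ((1:Quaternion ℝ)) : Fin (k+1) → Quaternion ℝ) =
            ((-1:ℝ)^(i:ℕ)) •
            (Pi.single i (p * (((-1:ℝ)^(i:ℕ)) • q i)) : Fin (k+1) → Quaternion ℝ) := by
          rw [← Pi.single_smul, mul_smul_comm, hpq, smul_smul, hsign]
          norm_num
        rw [h1]
        exact Submodule.smul_mem _ _ h0'
    -- decompose the value
    set c : Quaternion ℝ := y i with hcdef
    set b : ℝ := (c * star (q i)).re with hbdef
    set v₀ : Quaternion ℝ := c - c.re • 1 - b • q i with hv0
    have hv₀re : v₀.re = 0 := by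
      simp [hv0, Quaternion.re_sub, Quaternion.re_smul, hqre i]
    have hv₀q : (v₀ * star (q i)).re = 0 := by
      simp only [hv0, sub_mul, Quaternion.re_sub, smul_mul_assoc, Quaternion.re_smul,
        Quaternion.self_mul_star, hqn i, one_mul, Quaternion.re_coe, smul_eq_mul, ← hbdef]
      rw [Quaternion.re_star, hqre i]
      ring
    have hv0S : Pi.single i v₀ ∈ orthQ (k + 1) (UkSub k q) ⊔
        (orthQ (k + 1) (UkSub k q)).map (mulLeftLM (k + 1) p) :=
      Submodule.mem_sup_left (single_mem_orth i v₀ hv₀re hv₀q)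
    have hdecomp : c = c.re • (1:Quaternion ℝ) + b • q i + v₀ := by rw [hv0]; abel
    rw [hdecomp, Pi.single_add, Pi.single_add, Pi.single_smul, Pi.single_smul]
    exact Submodule.add_mem _ (Submodule.add_mem _ (Submodule.smul_mem _ _ honeS)
      (Submodule.smul_mem _ _ hqiS)) hv0S
  · push_neg at hcase
    exact hA i hcase.1 hcase.2 (y i)
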